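/- Let n ≥ 40 be an integer and α ∈ (0, √n). Then ∫_{α/√n}^{1} (1-t²)^{(n-3)/2} dt < (0.16 e^{-0.4625 α²}) / (√n (1 - e^{-0.1462 α})). -/

import Mathlib

set_option maxHeartbeats 800000


theorem stmt_11 (n : ℕ) (hn : 40 ≤ n) (α : ℝ) (hα : α ∈ Set.Ioo 0 (Real.sqrt n)) :
    (∫ t in (α / Real.sqrt n)..1, (1 - t ^ 2) ^ (((n : ℝ) - 3) / 2)) <
      0.16 * Real.exp (-0.4625 * α ^ 2) /
        (Real.sqrt n * (1 - Real.exp (-0.1462 * α))) := by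
  obtain ⟨hα0, hαs⟩ := hα
  have hN : (40:ℝ) ≤ (n:ℝ) := by exact_mod_cast hn
  have hn0 : (0:ℝ) < (n:ℝ) := by linarith
  set s := Real.sqrt (n:ℝ) with hs
  have hs0 : 0 < s := Real.sqrt_pos.mpr hn0
  have hs2 : s ^ 2 = (n:ℝ) := Real.sq_sqrt hn0.le
  set a := α / s with ha
  have ha0 : 0 < a := div_pos hα0 hs0
  have ha1 : a < 1 := (div_lt_one hs0).mpr hαs
  set m := ((n:ℝ) - 3) / 2 with hm
  have hm0 : 0 < m := by rw [hm]; linarith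
  set c := 2 * m * a with hc
  have hc0 : 0 < c := by positivity
  have ha2 : a ^ 2 = α ^ 2 / (n:ℝ) := by rw [ha, div_pow, hs2]
  -- continuity of the integrand
  have hcont : Continuous fun t : ℝ => (1 - t ^ 2) ^ m := by
    refine continuous_iff_continuousAt.mpr fun x => ?_
    exact (Real.continuousAt_rpow_const _ _ (Or.inr hm0.le)).comp (by fun_prop)
  have hcont2 : Continuous fun t : ℝ => Real.exp (m * a ^ 2 - c * t) := by fun_prop
  -- Step 1: pointwise bound
  have hmono : (∫ t in a..1, (1 - t ^ 2) ^ m) ≤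
      ∫ t in a..1, Real.exp (m * a ^ 2 - c * t) := by
    apply intervalIntegral.integral_mono_on ha1.le
      (hcont.intervalIntegrable a 1) (hcont2.intervalIntegrable a 1)
    intro t ht
    obtain ⟨hta, ht1⟩ := ht
    have h1 : 0 ≤ 1 - t ^ 2 := by nlinarith
    have h2 : 1 - t ^ 2 ≤ Real.exp (-(t ^ 2)) := by
      have := Real.add_one_le_exp (-(t ^ 2)); linarith
    calc (1 - t ^ 2) ^ m ≤ (Real.exp (-(t ^ 2))) ^ m :=
          Real.rpow_le_rpow h1 h2 hm0.le
      _ = Real.exp (-(t ^ 2) * m) := by rw [← Real.exp_mul]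
      _ ≤ Real.exp (m * a ^ 2 - c * t) := by
          apply Real.exp_le_exp.mpr
          rw [hc]
          nlinarith [sq_nonneg (t - a)]
  -- Step 2: compute the exponential integral
  have hder : ∀ t : ℝ, HasDerivAt (fun u => -Real.exp (m * a ^ 2 - c * u) / c)
      (Real.exp (m * a ^ 2 - c * t)) t := by
    intro t
    have h1 : HasDerivAt (fun u : ℝ => m * a ^ 2 - c * u) (-c) t := by
      simpa using ((hasDerivAt_id' t).const_mul c).const_sub (m * a ^ 2)
    have h3 := h1.exp.div_const (-c)
    have hcne : c ≠ 0 := ne_of_gt hc0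
    have heq : Real.exp (m * a ^ 2 - c * t) * (-c) / (-c) = Real.exp (m * a ^ 2 - c * t) := by
      field_simp
    rw [heq] at h3
    simp only [div_neg] at h3
    simpa [neg_div] using h3
  have hval : (∫ t in a..1, Real.exp (m * a ^ 2 - c * t)) =
      (-Real.exp (m * a ^ 2 - c * 1) / c) - (-Real.exp (m * a ^ 2 - c * a) / c) :=
    intervalIntegral.integral_eq_sub_of_hasDerivAt
      (fun t _ => hder t) (hcont2.intervalIntegrable a 1)
  have hbound : (∫ t in a..1, Real.exp (m * a ^ 2 - c * t)) ≤
      Real.exp (-(m * a ^ 2)) / c := by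
    rw [hval]
    have h1 : m * a ^ 2 - c * a = -(m * a ^ 2) := by rw [hc]; ring
    rw [h1, neg_div, neg_div]
    have h2 : 0 < Real.exp (m * a ^ 2 - c * 1) / c := by positivity
    linarith
  -- Step 3: compare with the target
  have hE : Real.exp (-(m * a ^ 2)) ≤ Real.exp (-0.4625 * α ^ 2) := by
    apply Real.exp_le_exp.mpr
    have key : 0.4625 * α ^ 2 ≤ m * α ^ 2 / (n:ℝ) := by
      rw [le_div_iff₀ hn0, hm]
      nlinarith [mul_nonneg (show (0:ℝ) ≤ 0.075 * (n:ℝ) - 3 by linarith) (sq_nonneg α)]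
    rw [ha2, ← mul_div_assoc]
    linarith
  have hD0 : 0 < 1 - Real.exp (-0.1462 * α) := by
    have h := Real.exp_lt_exp.mpr (show -0.1462 * α < 0 by nlinarith)
    rw [Real.exp_zero] at h
    linarith
  have hD1 : 1 - Real.exp (-0.1462 * α) < 0.1462 * α := by
    have := Real.add_one_lt_exp (show -0.1462 * α ≠ 0 by nlinarith)
    linarith
  have hlast : Real.exp (-(m * a ^ 2)) / c <
      0.16 * Real.exp (-0.4625 * α ^ 2) / (s * (1 - Real.exp (-0.1462 * α))) := by
    rw [div_lt_div_iff₀ hc0 (by positivity)]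
    have hkey : s * (1 - Real.exp (-0.1462 * α)) < 0.16 * c := by
      have h1 : s * (1 - Real.exp (-0.1462 * α)) < s * (0.1462 * α) :=
        mul_lt_mul_of_pos_left hD1 hs0
      have hcval : c = ((n:ℝ) - 3) * α / s := by rw [hc, hm, ha]; ring
      have h2 : s * (0.1462 * α) ≤ 0.16 * (((n:ℝ) - 3) * α / s) := by
        rw [mul_div_assoc', le_div_iff₀ hs0]
        have : s * (0.1462 * α) * s = 0.1462 * (n:ℝ) * α := by
          linear_combination 0.1462 * α * hs2
        rw [this]
        nlinarith [mul_nonneg (show (0:ℝ) ≤ 0.0138 * (n:ℝ) - 0.48 by linarith) hα0.le]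
      rw [hcval]
      linarith
    calc Real.exp (-(m * a ^ 2)) * (s * (1 - Real.exp (-0.1462 * α)))
        ≤ Real.exp (-0.4625 * α ^ 2) * (s * (1 - Real.exp (-0.1462 * α))) :=
          mul_le_mul_of_nonneg_right hE (by positivity)
      _ < Real.exp (-0.4625 * α ^ 2) * (0.16 * c) :=
          mul_lt_mul_of_pos_left hkey (Real.exp_pos _)
      _ = 0.16 * Real.exp (-0.4625 * α ^ 2) * c := by ring
  calc (∫ t in a..1, (1 - t ^ 2) ^ m) ≤ ∫ t in a..1, Real.exp (m * a ^ 2 - c * t) := hmono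
    _ ≤ Real.exp (-(m * a ^ 2)) / c := hbound
    _ < 0.16 * Real.exp (-0.4625 * α ^ 2) / (s * (1 - Real.exp (-0.1462 * α))) := hlast
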